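/- The presented group ⟨a, b | (ab)² = (ba)² = e⟩ (with relators (ab)² and (ba)²) is big, i.e. it contains a subgroup which is free of rank 2. -/

import Mathlib

/-- A group `G` is big if it contains a free subgroup of rank 2, i.e. there is an
injective group homomorphism from the free group on two generators into `G`. -/
def Big (G : Type*) [Group G] : Prop :=
  ∃ f : FreeGroup (Fin 2) →* G, Function.Injective f

/-- The relators `(ab)²` and `(ba)²` of the presentation `⟨a, b | (ab)² = (ba)² = e⟩`. -/
def rels : Set (FreeGroup (Fin 2)) :=
  {(FreeGroup.of 0 * FreeGroup.of 1) ^ 2, (FreeGroup.of 1 * FreeGroup.of 0) ^ 2}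

section Aux

theorem keyA (x y : ℚ) (h : ¬(|x| > |y| ∧ x*y < 0)) (h0 : ¬(x = 0 ∧ y = 0)) :
    |x+3*y| > |y| ∧ (x+3*y)*y ≥ 0 := by
  push_neg at h
  rcases lt_trichotomy y 0 with hy|hy|hy
  · have hx : x ≤ -y := by
      by_contra hx
      push_neg at hx
      have h1 : |x| > |y| := by
        rw [abs_of_pos (lt_trans (neg_pos.mpr hy) hx), abs_of_neg hy]; exact hx
      nlinarith [h h1]
    have h2 : x + 3*y < 0 := by linarith
    rw [abs_of_neg h2, abs_of_neg hy]
    constructor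
    · linarith
    · nlinarith
  · subst hy
    have hx : x ≠ 0 := by simpa using h0
    simpa using abs_pos.mpr hx
  · have hx : -y ≤ x := by
      by_contra hx
      push_neg at hx
      have h1 : |x| > |y| := by
        rw [abs_of_neg (lt_trans hx (neg_neg_iff_pos.mpr hy)), abs_of_pos hy]; linarith
      nlinarith [h h1]
    have h2 : 0 < x + 3*y := by linarith
    rw [abs_of_pos h2, abs_of_pos hy]
    constructor
    · linarith
    · nlinarith

theorem keyA' (x y : ℚ) (h : ¬(|x| > |y| ∧ x*y ≥ 0)) (h0 : ¬(x = 0 ∧ y = 0)) :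
    |x-3*y| > |y| ∧ (x-3*y)*y < 0 := by
  push_neg at h
  rcases lt_trichotomy y 0 with hy|hy|hy
  · have hx : x ≥ y := by
      by_contra hx
      push_neg at hx
      have h1 : |x| > |y| := by
        rw [abs_of_neg (lt_trans hx hy), abs_of_neg hy]; linarith
      nlinarith [h h1]
    have h2 : 0 < x - 3*y := by linarith
    rw [abs_of_pos h2, abs_of_neg hy]
    constructor
    · linarith
    · nlinarith
  · exfalso
    subst hy
    simp at h h0
    exact h0 (by nlinarith [h, abs_nonneg x, abs_eq_zero (a := x)])
  · have hx : x ≤ y := by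
      by_contra hx
      push_neg at hx
      have h1 : |x| > |y| := by
        rw [abs_of_pos (lt_trans hy hx), abs_of_pos hy]; exact hx
      nlinarith [h h1]
    have h2 : x - 3*y < 0 := by linarith
    rw [abs_of_neg h2, abs_of_pos hy]
    constructor
    · linarith
    · nlinarith

/-- The shear `(x, y) ↦ (x + 3y, y)` as a permutation of `ℚ × ℚ`. -/
def Amap : Equiv.Perm (ℚ × ℚ) where
  toFun v := (v.1 + 3*v.2, v.2)
  invFun v := (v.1 - 3*v.2, v.2)
  left_inv v := by simp
  right_inv v := by simp

/-- The swap `(x, y) ↦ (y, x)` as a permutation of `ℚ × ℚ`. -/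
def Smap : Equiv.Perm (ℚ × ℚ) := Equiv.prodComm ℚ ℚ

theorem Amap_pres (v : ℚ × ℚ) : v ≠ 0 ↔ Amap v ≠ 0 := by
  rw [not_iff_not]
  simp only [Amap, Equiv.coe_fn_mk, Prod.ext_iff, Prod.fst_zero, Prod.snd_zero]
  constructor
  · rintro ⟨h1, h2⟩; constructor <;> simp [h1, h2]
  · rintro ⟨h1, h2⟩; constructor <;> [linarith; exact h2]

theorem Smap_pres (v : ℚ × ℚ) : v ≠ 0 ↔ Smap v ≠ 0 := by
  rw [not_iff_not]
  simp [Smap, Prod.ext_iff, and_comm]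

/-- Ambient space: the punctured plane. -/
abbrev Pt : Type := { v : ℚ × ℚ // v ≠ 0 }

def Ahat : Equiv.Perm Pt := Amap.subtypePerm (fun v => (Amap_pres v).symm)
def Shat : Equiv.Perm Pt := Smap.subtypePerm (fun v => (Smap_pres v).symm)

theorem Shat_sq : Shat * Shat = 1 := by
  ext v <;> rfl

def Bhat : Equiv.Perm Pt := Shat * Ahat * Shat⁻¹

theorem Ahat_apply (v : Pt) : (Ahat v : ℚ × ℚ) = (v.1.1 + 3*v.1.2, v.1.2) := rfl

theorem Ahat_inv_apply (v : Pt) : (Ahat⁻¹ v : ℚ × ℚ) = (v.1.1 - 3*v.1.2, v.1.2) := rfl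

theorem Bhat_apply (v : Pt) : (Bhat v : ℚ × ℚ) = (v.1.1, v.1.2 + 3*v.1.1) := rfl

theorem Bhat_inv_apply (v : Pt) : (Bhat⁻¹ v : ℚ × ℚ) = (v.1.1, v.1.2 - 3*v.1.1) := rfl

end Aux

/-- The group `⟨a, b | (ab)² = (ba)² = e⟩` is big. -/
theorem presentedGroup_big : Big (PresentedGroup rels) := by
  classical
  -- the target permutation images of the two generators of the presentation
  set f : Fin 2 → Equiv.Perm Pt := ![Ahat, Ahat⁻¹ * Shat] with hf
  have hrel : ∀ r ∈ rels, FreeGroup.lift f r = 1 := by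
    intro r hr
    have hAS : f 0 * f 1 = Shat := by
      simp [hf, ← mul_assoc]
    rcases hr with rfl | rfl
    · rw [map_pow, map_mul, FreeGroup.lift_apply_of, FreeGroup.lift_apply_of, hAS, sq, Shat_sq]
    · rw [map_pow, map_mul, FreeGroup.lift_apply_of, FreeGroup.lift_apply_of]
      have : (f 1 * f 0) ^ 2 = (f 0)⁻¹ * ((f 0 * f 1) * (f 0 * f 1)) * f 0 := by rw [sq]; group
      rw [this, hAS, Shat_sq]
      group
  set φ : PresentedGroup rels →* Equiv.Perm Pt := PresentedGroup.toGroup hrel with hφ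
  -- the embedding of the free group
  set t : PresentedGroup rels := PresentedGroup.of 0 * PresentedGroup.of 1 with ht
  set ψ : FreeGroup (Fin 2) →* PresentedGroup rels :=
    FreeGroup.lift ![PresentedGroup.of 0, t * PresentedGroup.of 0 * t⁻¹] with hψ
  refine ⟨ψ, ?_⟩
  have hφt : φ t = Shat := by
    rw [ht, map_mul, hφ, PresentedGroup.toGroup.of, PresentedGroup.toGroup.of]
    show f 0 * f 1 = Shat
    simp [hf, ← mul_assoc]
  have hcomp : ∀ w, φ (ψ w) = FreeGroup.lift ![Ahat, Bhat] w := by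
    intro w
    have : φ.comp ψ = FreeGroup.lift ![Ahat, Bhat] := by
      apply FreeGroup.ext_hom
      intro i
      fin_cases i
      · show φ (ψ (FreeGroup.of 0)) = ![Ahat, Bhat] 0
        rw [hψ, FreeGroup.lift_apply_of]
        show φ (PresentedGroup.of 0) = Ahat
        rw [hφ, PresentedGroup.toGroup.of]
        rfl
      · show φ (ψ (FreeGroup.of 1)) = ![Ahat, Bhat] 1
        rw [hψ, FreeGroup.lift_apply_of]
        show φ (t * PresentedGroup.of 0 * t⁻¹) = Bhat
        rw [map_mul, map_mul, map_inv, hφt, hφ, PresentedGroup.toGroup.of]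
        rfl
    calc φ (ψ w) = φ.comp ψ w := rfl
    _ = FreeGroup.lift ![Ahat, Bhat] w := by rw [this]
  have hinj : Function.Injective (FreeGroup.lift ![Ahat, Bhat]) := by
    -- ping-pong sets
    set X : Fin 2 → Set Pt :=
      ![{v | |(v : ℚ × ℚ).1| > |(v : ℚ × ℚ).2| ∧ (v : ℚ × ℚ).1 * (v : ℚ × ℚ).2 ≥ 0},
        {v | |(v : ℚ × ℚ).2| > |(v : ℚ × ℚ).1| ∧ (v : ℚ × ℚ).1 * (v : ℚ × ℚ).2 ≥ 0}] with hX
    set Y : Fin 2 → Set Pt :=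
      ![{v | |(v : ℚ × ℚ).1| > |(v : ℚ × ℚ).2| ∧ (v : ℚ × ℚ).1 * (v : ℚ × ℚ).2 < 0},
        {v | |(v : ℚ × ℚ).2| > |(v : ℚ × ℚ).1| ∧ (v : ℚ × ℚ).1 * (v : ℚ × ℚ).2 < 0}] with hY
    apply FreeGroup.injective_lift_of_ping_pong ![Ahat, Bhat] X Y
    · intro i
      fin_cases i
      · refine ⟨⟨(1, 0), by simp⟩, ?_⟩
        show |(1 : ℚ)| > |(0 : ℚ)| ∧ (1 : ℚ) * 0 ≥ 0
        norm_num
      · refine ⟨⟨(0, 1), by simp⟩, ?_⟩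
        show |(1 : ℚ)| > |(0 : ℚ)| ∧ (0 : ℚ) * 1 ≥ 0
        norm_num
    · intro i j hij
      fin_cases i <;> fin_cases j <;>
      first
      | exact absurd rfl hij
      | · simp only [Function.onFun]
          rw [Set.disjoint_left]
          rintro v ⟨h1, h2⟩ ⟨h3, h4⟩
          linarith
    · intro i j hij
      fin_cases i <;> fin_cases j <;>
      first
      | exact absurd rfl hij
      | · simp only [Function.onFun]
          rw [Set.disjoint_left]
          rintro v ⟨h1, h2⟩ ⟨h3, h4⟩
          linarith
    · intro i j
      fin_cases i <;> fin_cases j <;>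
        · rw [Set.disjoint_left]
          rintro v ⟨h1, h2⟩ ⟨h3, h4⟩
          linarith
    · intro i
      fin_cases i
      · intro x hx
        rw [Set.mem_smul_set] at hx
        obtain ⟨v, hv, rfl⟩ := hx
        have h0 : ¬((v : ℚ × ℚ).1 = 0 ∧ (v : ℚ × ℚ).2 = 0) := by
          intro ⟨h1, h2⟩; exact v.2 (Prod.ext h1 h2)
        have hv' : ¬(|(v : ℚ × ℚ).1| > |(v : ℚ × ℚ).2| ∧
            (v : ℚ × ℚ).1 * (v : ℚ × ℚ).2 < 0) := hv
        exact keyA _ _ hv' h0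
      · intro x hx
        rw [Set.mem_smul_set] at hx
        obtain ⟨v, hv, rfl⟩ := hx
        have h0 : ¬((v : ℚ × ℚ).1 = 0 ∧ (v : ℚ × ℚ).2 = 0) := by
          intro ⟨h1, h2⟩; exact v.2 (Prod.ext h1 h2)
        have hv' : ¬(|(v : ℚ × ℚ).2| > |(v : ℚ × ℚ).1| ∧
            (v : ℚ × ℚ).2 * (v : ℚ × ℚ).1 < 0) := by
          rw [mul_comm]; exact hv
        have hg := keyA (v : ℚ × ℚ).2 (v : ℚ × ℚ).1 hv' (fun h => h0 ⟨h.2, h.1⟩)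
        exact ⟨hg.1, by rw [mul_comm]; exact hg.2⟩
    · intro i
      fin_cases i
      · intro x hx
        rw [Set.mem_smul_set] at hx
        obtain ⟨v, hv, rfl⟩ := hx
        have h0 : ¬((v : ℚ × ℚ).1 = 0 ∧ (v : ℚ × ℚ).2 = 0) := by
          intro ⟨h1, h2⟩; exact v.2 (Prod.ext h1 h2)
        have hv' : ¬(|(v : ℚ × ℚ).1| > |(v : ℚ × ℚ).2| ∧
            (v : ℚ × ℚ).1 * (v : ℚ × ℚ).2 ≥ 0) := hv
        exact keyA' _ _ hv' h0
      · intro x hx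
        rw [Set.mem_smul_set] at hx
        obtain ⟨v, hv, rfl⟩ := hx
        have h0 : ¬((v : ℚ × ℚ).1 = 0 ∧ (v : ℚ × ℚ).2 = 0) := by
          intro ⟨h1, h2⟩; exact v.2 (Prod.ext h1 h2)
        have hv' : ¬(|(v : ℚ × ℚ).2| > |(v : ℚ × ℚ).1| ∧
            (v : ℚ × ℚ).2 * (v : ℚ × ℚ).1 ≥ 0) := by
          rw [mul_comm]; exact hv
        have hg := keyA' (v : ℚ × ℚ).2 (v : ℚ × ℚ).1 hv' (fun h => h0 ⟨h.2, h.1⟩)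
        exact ⟨hg.1, by rw [mul_comm]; exact hg.2⟩
  intro u w huw
  apply hinj
  rw [← hcomp, ← hcomp, huw]
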